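/- Let (G,c) be an n-vertex edge-minimal edge-colored graph with replication number R, let v be a vertex, X ⊆ N(v), and Y a nonempty subset of V \ {v}. Then the average over y ∈ Y of ρ_{v,X}(y) is at least δ^c(G) + |X| − n − (R−1)·|X ∩ N_!(v)|/|Y|, and the same lower bound holds for the average of σ_{v,X}(y). -/

import Mathlib

open Finset

variable {V : Type*}

/-- Number of distinct colors on edges incident to `v`. -/
noncomputable def colorDeg (G : SimpleGraph V) (c : Sym2 V → ℕ) (v : V) : ℕ :=
  Set.ncard {α : ℕ | ∃ u, G.Adj u v ∧ c s(u, v) = α}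

/-- Number of distinct colors `c({u,v})` over `u ∈ N(v) ∩ U`. -/
noncomputable def colorDegOn (G : SimpleGraph V) (c : Sym2 V → ℕ) (v : V) (U : Set V) : ℕ :=
  Set.ncard {α : ℕ | ∃ u ∈ U, G.Adj u v ∧ c s(u, v) = α}

/-- Minimum color-degree `δ^c(G)`. -/
noncomputable def minColorDeg (G : SimpleGraph V) (c : Sym2 V → ℕ) : ℕ :=
  ⨅ v : V, colorDeg G c v

/-- `(G,c)` is edge-minimal: no proper spanning subgraph has the same minimum color-degree. -/
def EdgeMinimal (G : SimpleGraph V) (c : Sym2 V → ℕ) : Prop :=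
  ∀ H : SimpleGraph V, H ≤ G → H ≠ G → minColorDeg H c ≠ minColorDeg G c

/-- `(G,c)` contains a rainbow cycle on `ℓ` vertices. -/
def HasRainbowCycle (G : SimpleGraph V) (c : Sym2 V → ℕ) (ℓ : ℕ) : Prop :=
  ∃ (u : V) (p : G.Walk u u), p.IsCycle ∧ p.length = ℓ ∧ (p.edges.map c).Nodup

/-- There is a rainbow path from `v` to `y` on `k` vertices whose edge colors avoid `C`. -/
def RainbowPathAvoiding (G : SimpleGraph V) (c : Sym2 V → ℕ) (v y : V) (k : ℕ)
    (C : Set ℕ) : Prop :=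
  ∃ p : G.Walk v y, p.IsPath ∧ p.length + 1 = k ∧ (p.edges.map c).Nodup ∧
    ∀ e ∈ p.edges, c e ∉ C

/-- `σ_{v,X}(y)`: the number of colors `X`-separating `y` from `v`. -/
noncomputable def sepCount (G : SimpleGraph V) (c : Sym2 V → ℕ) (v : V) (X : Set V)
    (y : V) : ℕ :=
  Set.ncard {α : ℕ | ∃ x ∈ X, G.Adj x y ∧ c s(x, y) = α ∧ c s(v, x) ≠ α}

/-- `ρ_{v,X}(y)`: the number of colors restricted for `y` by `(v,X)`. -/
noncomputable def restrCount (G : SimpleGraph V) (c : Sym2 V → ℕ) (v : V) (X : Set V)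
    (y : V) : ℕ :=
  Set.ncard {α : ℕ | (∃ x ∈ X, G.Adj x y ∧ c s(x, y) = α ∧ c s(v, x) ≠ α) ∧
    ∀ w, G.Adj w y → w ∉ X → c s(w, y) ≠ α}

/-- The replication number `R(G,c) = max_{v,α} |N_α(v)|`. -/
noncomputable def repNum (G : SimpleGraph V) (c : Sym2 V → ℕ) : ℕ :=
  ⨆ v : V, ⨆ α : ℕ, Set.ncard {u : V | G.Adj u v ∧ c s(u, v) = α}

/-- `N_!(v)`: neighbors `u` of `v` whose color `c({u,v})` appears on exactly one edge at `v`. -/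
def bangNbhd (G : SimpleGraph V) (c : Sym2 V → ℕ) (v : V) : Set V :=
  {u : V | G.Adj u v ∧ Set.ncard {w : V | G.Adj w v ∧ c s(w, v) = c s(u, v)} = 1}

lemma aux_unique_end [Fintype V] {G : SimpleGraph V} {c : Sym2 V → ℕ}
    (hmin : EdgeMinimal G c) {a b : V} (hab : G.Adj a b) :
    Set.ncard {w | G.Adj w a ∧ c s(w, a) = c s(b, a)} = 1 ∨
    Set.ncard {w | G.Adj w b ∧ c s(w, b) = c s(a, b)} = 1 := by
  by_contra h
  push_neg at h
  obtain ⟨h1, h2⟩ := h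
  have hge1 : 1 < Set.ncard {w | G.Adj w a ∧ c s(w, a) = c s(b, a)} := by
    have hb : b ∈ {w | G.Adj w a ∧ c s(w, a) = c s(b, a)} := ⟨hab.symm, rfl⟩
    have := (Set.ncard_pos (Set.toFinite _)).2 ⟨b, hb⟩
    omega
  have hge2 : 1 < Set.ncard {w | G.Adj w b ∧ c s(w, b) = c s(a, b)} := by
    have ha : a ∈ {w | G.Adj w b ∧ c s(w, b) = c s(a, b)} := ⟨hab, rfl⟩
    have := (Set.ncard_pos (Set.toFinite _)).2 ⟨a, ha⟩
    omega
  refine hmin (G.deleteEdges {s(a, b)}) (SimpleGraph.deleteEdges_le _) ?_ ?_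
  · intro hH
    have hab' := hab
    rw [← hH, SimpleGraph.deleteEdges_adj] at hab'
    exact hab'.2 rfl
  · have hcd : ∀ u, colorDeg (G.deleteEdges {s(a, b)}) c u = colorDeg G c u := by
      intro u
      unfold colorDeg
      congr 1
      ext α
      simp only [Set.mem_setOf_eq]
      constructor
      · rintro ⟨w, hw, rfl⟩
        exact ⟨w, (SimpleGraph.deleteEdges_adj.1 hw).1, rfl⟩
      · rintro ⟨w, hw, rfl⟩
        by_cases he : s(w, u) = s(a, b)
        · rw [Sym2.eq_iff] at he
          rcases he with ⟨he1, he2⟩ | ⟨he1, he2⟩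
          · -- w = a, u = b : need another edge at b of color c s(a,b)
            rw [he1, he2]
            obtain ⟨w', ⟨hw'adj, hw'c⟩, hw'ne⟩ :=
              Set.exists_ne_of_one_lt_ncard hge2 a
            refine ⟨w', ?_, hw'c⟩
            rw [SimpleGraph.deleteEdges_adj]
            refine ⟨hw'adj, ?_⟩
            intro hmem
            rw [Set.mem_singleton_iff, Sym2.eq_iff] at hmem
            rcases hmem with ⟨h3, h4⟩ | ⟨h3, h4⟩
            · exact hw'ne h3
            · exact hab.ne h4.symm
          · -- w = b, u = a
            rw [he1, he2]
            obtain ⟨w', ⟨hw'adj, hw'c⟩, hw'ne⟩ :=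
              Set.exists_ne_of_one_lt_ncard hge1 b
            refine ⟨w', ?_, hw'c⟩
            rw [SimpleGraph.deleteEdges_adj]
            refine ⟨hw'adj, ?_⟩
            intro hmem
            rw [Set.mem_singleton_iff, Sym2.eq_iff] at hmem
            rcases hmem with ⟨h3, h4⟩ | ⟨h3, h4⟩
            · exact hab.ne h4
            · exact hw'ne h3
        · exact ⟨w, SimpleGraph.deleteEdges_adj.2 ⟨hw, by simpa using he⟩, rfl⟩
    unfold minColorDeg
    simp only [hcd]

lemma aux_le_repNum [Fintype V] (G : SimpleGraph V) (c : Sym2 V → ℕ) (x : V) (α : ℕ) :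
    Set.ncard {u | G.Adj u x ∧ c s(u, x) = α} ≤ repNum G c := by
  have hb : ∀ (y : V) (β : ℕ),
      Set.ncard {u | G.Adj u y ∧ c s(u, y) = β} ≤ Fintype.card V := by
    intro y β
    have := Set.ncard_le_ncard (Set.subset_univ {u | G.Adj u y ∧ c s(u, y) = β})
      Set.finite_univ
    simpa [Set.ncard_univ] using this
  have h1 : Set.ncard {u | G.Adj u x ∧ c s(u, x) = α} ≤
      ⨆ β : ℕ, Set.ncard {u | G.Adj u x ∧ c s(u, x) = β} :=
    le_ciSup ⟨Fintype.card V, by rintro m ⟨β, rfl⟩; exact hb x β⟩ α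
  refine h1.trans ?_
  exact le_ciSup (f := fun y => ⨆ β : ℕ, Set.ncard {u | G.Adj u y ∧ c s(u, y) = β})
    ⟨Fintype.card V, by
      rintro m ⟨y, rfl⟩
      exact ciSup_le fun β => hb y β⟩ x

lemma aux_minColorDeg_le [Fintype V] (G : SimpleGraph V) (c : Sym2 V → ℕ) (y : V) :
    minColorDeg G c ≤ colorDeg G c y :=
  ciInf_le (OrderBot.bddBelow _) y

theorem stmt4 [Fintype V] (G : SimpleGraph V) (c : Sym2 V → ℕ)
    (hmin : EdgeMinimal G c) (v : V) (X Y : Finset V)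
    (hX : ∀ x ∈ X, G.Adj v x) (hY : Y.Nonempty) (hvY : v ∉ Y) :
    (∑ y ∈ Y, (restrCount G c v ↑X y : ℚ)) / Y.card ≥
        (minColorDeg G c : ℚ) + X.card - Fintype.card V -
          ((repNum G c : ℚ) - 1) * (Set.ncard (↑X ∩ bangNbhd G c v) : ℚ) / Y.card ∧
    (∑ y ∈ Y, (sepCount G c v ↑X y : ℚ)) / Y.card ≥
        (minColorDeg G c : ℚ) + X.card - Fintype.card V -
          ((repNum G c : ℚ) - 1) * (Set.ncard (↑X ∩ bangNbhd G c v) : ℚ) / Y.card := by 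
  classical
  have hYpos : (0 : ℚ) < Y.card := by exact_mod_cast Finset.card_pos.2 hY
  set P : V → V → Prop := fun x y => G.Adj x y ∧ c s(x, y) = c s(v, x) with hP
  -- Step 1 : per-y bound (in ℕ)
  have hy : ∀ y ∈ Y, minColorDeg G c + X.card ≤
      Fintype.card V + restrCount G c v ↑X y +
        (X.filter (fun x => P x y)).card := by
    intro y _
    have hfinR : {α : ℕ | (∃ x ∈ (↑X : Set V), G.Adj x y ∧ c s(x, y) = α ∧ c s(v, x) ≠ α) ∧
        ∀ w, G.Adj w y → w ∉ (↑X : Set V) → c s(w, y) ≠ α}.Finite := by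
      apply (Set.finite_range (fun x : V => c s(x, y))).subset
      rintro α ⟨⟨x, -, -, hx, -⟩, -⟩
      exact ⟨x, hx⟩
    have hsub : {α : ℕ | ∃ u, G.Adj u y ∧ c s(u, y) = α} ⊆
        ((fun w => c s(w, y)) '' (↑X : Set V)ᶜ) ∪
        ({α : ℕ | (∃ x ∈ (↑X : Set V), G.Adj x y ∧ c s(x, y) = α ∧ c s(v, x) ≠ α) ∧
            ∀ w, G.Adj w y → w ∉ (↑X : Set V) → c s(w, y) ≠ α} ∪
          ((fun x => c s(x, y)) '' {x | x ∈ (↑X : Set V) ∧ P x y})) := by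
      rintro α ⟨u, hu, rfl⟩
      by_cases hB : ∃ w, w ∉ (↑X : Set V) ∧ G.Adj w y ∧ c s(w, y) = c s(u, y)
      · obtain ⟨w, hw1, hw2, hw3⟩ := hB
        exact Or.inl ⟨w, hw1, hw3⟩
      · push_neg at hB
        have huX : u ∈ (↑X : Set V) := by
          by_contra hcon
          exact hB u hcon hu rfl
        by_cases hR : ∃ x ∈ (↑X : Set V), G.Adj x y ∧ c s(x, y) = c s(u, y) ∧
            c s(v, x) ≠ c s(u, y)
        · exact Or.inr (Or.inl ⟨hR, fun w hw hwX => hB w hwX hw⟩)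
        · push_neg at hR
          have hcu : c s(v, u) = c s(u, y) := hR u huX hu rfl
          exact Or.inr (Or.inr ⟨u, ⟨huX, hu, hcu.symm⟩, rfl⟩)
    have h1 : colorDeg G c y ≤ Set.ncard ((↑X : Set V)ᶜ) +
        (restrCount G c v ↑X y + (X.filter (fun x => P x y)).card) := by
      have h2 : colorDeg G c y ≤
          Set.ncard ((fun w => c s(w, y)) '' (↑X : Set V)ᶜ) +
          (Set.ncard {α : ℕ | (∃ x ∈ (↑X : Set V), G.Adj x y ∧ c s(x, y) = α ∧ c s(v, x) ≠ α) ∧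
              ∀ w, G.Adj w y → w ∉ (↑X : Set V) → c s(w, y) ≠ α} +
            Set.ncard ((fun x => c s(x, y)) '' {x | x ∈ (↑X : Set V) ∧ P x y})) := by
        refine le_trans (Set.ncard_le_ncard hsub ?_) ?_
        · exact ((Set.toFinite _).image _).union (hfinR.union ((Set.toFinite _).image _))
        · exact le_trans (Set.ncard_union_le _ _)
            (add_le_add le_rfl (Set.ncard_union_le _ _))
      refine h2.trans (add_le_add (Set.ncard_image_le (Set.toFinite _))
        (add_le_add le_rfl ?_))
      refine le_trans (Set.ncard_image_le (Set.toFinite _)) ?_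
      have : {x | x ∈ (↑X : Set V) ∧ P x y} = ↑(X.filter (fun x => P x y)) := by
        ext x; simp [hP]
      rw [this, Set.ncard_coe_finset]
    have h3 : minColorDeg G c ≤ colorDeg G c y := aux_minColorDeg_le G c y
    have h4 : Set.ncard ((↑X : Set V)ᶜ) + X.card = Fintype.card V := by
      have := Set.ncard_add_ncard_compl (↑X : Set V)
      rw [Set.ncard_coe_finset, Nat.card_eq_fintype_card] at this
      omega
    omega
  -- Step 2 : per-x bound on bad pairs
  have hx1 : ∀ x ∈ X, ((Y.filter (fun y => P x y)).card : ℚ) ≤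
      if x ∈ bangNbhd G c v then (repNum G c : ℚ) - 1 else 0 := by
    intro x hxX
    have hadj := hX x hxX
    set T : Set V := {u | G.Adj u x ∧ c s(u, x) = c s(v, x)} with hT
    have hvT : v ∈ T := ⟨hadj, rfl⟩
    have hsubT : (↑(Y.filter (fun y => P x y)) : Set V) ⊆ T \ {v} := by
      intro y hy'
      simp only [Finset.coe_filter, Set.mem_setOf_eq, hP] at hy'
      obtain ⟨hyY, hadj', hc⟩ := hy'
      refine ⟨⟨hadj'.symm, ?_⟩, ?_⟩
      · rw [Sym2.eq_swap]; exact hc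
      · simp only [Set.mem_singleton_iff]
        rintro rfl; exact hvY hyY
    by_cases hbang : x ∈ bangNbhd G c v
    · simp only [hbang, if_true]
      have hcard1 : (Y.filter (fun y => P x y)).card ≤ (T \ {v}).ncard := by
        rw [← Set.ncard_coe_finset]
        exact Set.ncard_le_ncard hsubT ((Set.toFinite T).diff (t := {v}))
      have hcard2 : (T \ {v}).ncard = T.ncard - 1 :=
        Set.ncard_diff_singleton_of_mem hvT
      have hTpos : 1 ≤ T.ncard := (Set.ncard_pos (Set.toFinite T)).2 ⟨v, hvT⟩
      have hTR : T.ncard ≤ repNum G c := aux_le_repNum G c x (c s(v, x))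
      have : (Y.filter (fun y => P x y)).card + 1 ≤ repNum G c := by omega
      have := (Nat.cast_le (α := ℚ)).2 this
      push_cast at this
      linarith
    · simp only [hbang, if_false]
      have hT1 : T.ncard = 1 := by
        rcases aux_unique_end hmin hadj.symm with h | h
        · exact h
        · exfalso
          apply hbang
          exact ⟨hadj.symm, h⟩
      obtain ⟨a, ha⟩ := Set.ncard_eq_one.1 hT1
      have hva : v = a := by
        have := hvT; rw [ha] at this; exact this
      have hempty : (Y.filter (fun y => P x y)) = ∅ := by
        rw [← Finset.coe_eq_empty]
        apply Set.subset_empty_iff.1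
        intro y hy'
        have := hsubT hy'
        rw [ha, ← hva] at this
        exact this.2 this.1
      rw [hempty]
      simp
  -- Step 3 : double counting
  have hswap : ∑ y ∈ Y, (X.filter (fun x => P x y)).card =
      ∑ x ∈ X, (Y.filter (fun y => P x y)).card := by
    simp only [Finset.card_filter]
    exact Finset.sum_comm
  have hBeq : (X.filter (fun x => x ∈ bangNbhd G c v)).card =
      Set.ncard (↑X ∩ bangNbhd G c v) := by
    rw [← Set.ncard_coe_finset]
    congr 1
    ext x
    simp
  have hx2 : (∑ x ∈ X, ((Y.filter (fun y => P x y)).card : ℚ)) ≤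
      ((repNum G c : ℚ) - 1) * (Set.ncard (↑X ∩ bangNbhd G c v) : ℚ) := by
    refine le_trans (Finset.sum_le_sum hx1) ?_
    rw [← Finset.sum_filter, Finset.sum_const, nsmul_eq_mul, hBeq, mul_comm]
  -- Step 4 : assemble
  set S : ℚ := ∑ y ∈ Y, (restrCount G c v ↑X y : ℚ) with hS
  set q : ℚ := ((repNum G c : ℚ) - 1) * (Set.ncard (↑X ∩ bangNbhd G c v) : ℚ) with hq
  have key : ((minColorDeg G c : ℚ) + X.card) * Y.card ≤
      (Fintype.card V : ℚ) * Y.card + S + q := by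
    have hsum : ∑ y ∈ Y, ((minColorDeg G c : ℚ) + X.card) ≤
        ∑ y ∈ Y, ((Fintype.card V : ℚ) + (restrCount G c v ↑X y : ℚ) +
          ((X.filter (fun x => P x y)).card : ℚ)) := by
      refine Finset.sum_le_sum fun y hyY => ?_
      have := hy y hyY
      have := (Nat.cast_le (α := ℚ)).2 this
      push_cast at this
      linarith
    rw [Finset.sum_const, nsmul_eq_mul] at hsum
    rw [Finset.sum_add_distrib, Finset.sum_add_distrib, Finset.sum_const,
      nsmul_eq_mul] at hsum
    have hbadsum : ∑ y ∈ Y, (((X.filter (fun x => P x y)).card : ℚ)) ≤ q := by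
      rw [hq]
      refine le_trans ?_ hx2
      rw [← Nat.cast_sum, ← Nat.cast_sum, hswap]
    calc ((minColorDeg G c : ℚ) + X.card) * Y.card
        = (Y.card : ℚ) * ((minColorDeg G c : ℚ) + X.card) := by ring
      _ ≤ (Y.card : ℚ) * (Fintype.card V : ℚ) + S +
            ∑ y ∈ Y, (((X.filter (fun x => P x y)).card : ℚ)) := by
          rw [hS]; linarith
      _ ≤ (Fintype.card V : ℚ) * Y.card + S + q := by
          rw [mul_comm]; linarith
  have part1 : S / Y.card ≥
      (minColorDeg G c : ℚ) + X.card - Fintype.card V - q / Y.card := by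
    rw [ge_iff_le, le_div_iff₀ hYpos]
    have hexp : ((minColorDeg G c : ℚ) + X.card - Fintype.card V - q / Y.card) * Y.card
        = ((minColorDeg G c : ℚ) + X.card) * Y.card - (Fintype.card V : ℚ) * Y.card - q := by
      rw [sub_mul, sub_mul, div_mul_cancel₀ _ (ne_of_gt hYpos)]
    rw [hexp]
    linarith
  refine ⟨part1, ?_⟩
  have hmono : S ≤ ∑ y ∈ Y, (sepCount G c v ↑X y : ℚ) := by
    rw [hS]
    refine Finset.sum_le_sum fun y _ => ?_
    have hle : restrCount G c v ↑X y ≤ sepCount G c v ↑X y := by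
      apply Set.ncard_le_ncard
      · rintro α ⟨h1, -⟩; exact h1
      · apply (Set.finite_range (fun x : V => c s(x, y))).subset
        rintro α ⟨x, -, -, hx, -⟩
        exact ⟨x, hx⟩
    exact_mod_cast hle
  refine le_trans part1 ?_
  gcongr
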